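/- Let G = (V,E) be a finite simple graph, k ≥ 1 an integer, and S ⊆ V with |S| ≤ 4k such that every connected component of G − S is a clique or a tree. Let V_ld denote the set of large-dense vertices of G. Suppose that: every vertex v ∉ V_ld satisfies |N(v)| ≤ 7k; every vertex v ∈ V_ld \ S lies in a connected component of G − S that is a clique; and at most 8k connected components of G − S are cliques with at least 3 vertices. Then the number of vertices v ∈ V_ld that have at least one neighbor outside V_ld is at most 84k² + 4k. -/

import Mathlib

open SimpleGraph

/-- The number of edges of `G` with both endpoints in the neighborhood of `v`. -/
noncomputable def rho {V : Type*} (G : SimpleGraph V) (v : V) : ℕ :=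
  {e : Sym2 V | e ∈ G.edgeSet ∧ ∀ x ∈ e, G.Adj v x}.ncard

/-- `v` is large-sparse: `|N(v)| > 7k` and `ρ(v) ≤ |N(v)|(|N(v)|−1)/4`. -/
def LargeSparse {V : Type*} (G : SimpleGraph V) (k : ℕ) (v : V) : Prop :=
  7 * k < (G.neighborSet v).ncard ∧
    4 * rho G v ≤ (G.neighborSet v).ncard * ((G.neighborSet v).ncard - 1)

/-- `v` is large-dense: `|N(v)| > 7k` and `ρ(v) > |N(v)|(|N(v)|−1)/4`. -/
def LargeDense {V : Type*} (G : SimpleGraph V) (k : ℕ) (v : V) : Prop :=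
  7 * k < (G.neighborSet v).ncard ∧
    (G.neighborSet v).ncard * ((G.neighborSet v).ncard - 1) < 4 * rho G v

/-- The connected component `c` of `H` is a clique. -/
def CompIsClique {W : Type*} (H : SimpleGraph W) (c : H.ConnectedComponent) : Prop :=
  H.IsClique c.supp

/-- The connected component `c` of `H` is a tree. -/
def CompIsTree {W : Type*} (H : SimpleGraph W) (c : H.ConnectedComponent) : Prop :=
  (H.induce c.supp).IsTree

/-- Every connected component of `H` is a clique or a tree. -/
def CliquesOrTrees {W : Type*} (H : SimpleGraph W) : Prop :=
  ∀ c : H.ConnectedComponent, CompIsClique H c ∨ CompIsTree H c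

/-- `X` is a feasible solution for `(G, k)`: `|X| ≤ k` and every connected component of
`G − X` is a clique or a tree. -/
def IsFeasible {V : Type*} (G : SimpleGraph V) (k : ℕ) (X : Set V) : Prop :=
  X.ncard ≤ k ∧ CliquesOrTrees (G.induce (Xᶜ : Set V))

/-- let `S ⊆ V` with `|S| ≤ 4k` such that every connected component of
`G − S` is a clique or a tree. Suppose every non-large-dense vertex has at most `7k`
neighbors, every large-dense vertex outside `S` lies in a clique component of `G − S`,
and at most `8k` components of `G − S` are cliques with at least 3 vertices. Then at most
`84k² + 4k` large-dense vertices have a neighbor outside the set of large-dense vertices. -/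
lemma cover_card {α ι : Type*} [Finite α] (m : ℕ) (f : ι → Set α) (I : Set ι) (hI : I.Finite) :
    ∀ (T : Set α), (∀ x ∈ T, ∃ i ∈ I, x ∈ f i) → (∀ i ∈ I, (f i).ncard ≤ m) →
    T.ncard ≤ I.ncard * m := by
  refine Set.Finite.induction_on (motive := fun I _ => ∀ (T : Set α),
    (∀ x ∈ T, ∃ i ∈ I, x ∈ f i) → (∀ i ∈ I, (f i).ncard ≤ m) → T.ncard ≤ I.ncard * m)
    I hI ?_ ?_
  · intro T hT _
    have : T = ∅ := by
      ext x; simp only [Set.mem_empty_iff_false, iff_false]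
      intro hx
      obtain ⟨i, hi, -⟩ := hT x hx
      exact hi
    simp [this]
  · intro i I' hiI' hI' ih T hT hf
    have hsub : T ⊆ f i ∪ (T \ f i) := by
      intro x hx
      by_cases h : x ∈ f i
      · exact Or.inl h
      · exact Or.inr ⟨hx, h⟩
    have h1 : (T \ f i).ncard ≤ I'.ncard * m := by
      refine ih _ (fun x hx => ?_) (fun j hj => hf j (Set.mem_insert_of_mem _ hj))
      obtain ⟨j, hj, hxj⟩ := hT x hx.1
      rcases hj with rfl | hj
      · exact absurd hxj hx.2
      · exact ⟨j, hj, hxj⟩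
    calc T.ncard ≤ (f i ∪ (T \ f i)).ncard := Set.ncard_le_ncard hsub
      _ ≤ (f i).ncard + (T \ f i).ncard := Set.ncard_union_le _ _
      _ ≤ m + I'.ncard * m := add_le_add (hf i (Set.mem_insert _ _)) h1
      _ = (I'.ncard + 1) * m := by ring
      _ = (insert i I').ncard * m := by rw [Set.ncard_insert_of_notMem hiI' hI']

theorem stmt_17 {V : Type*} [Fintype V] (G : SimpleGraph V) (k : ℕ) (hk : 1 ≤ k)
    (S : Set V) (hScard : S.ncard ≤ 4 * k)
    (hS : CliquesOrTrees (G.induce (Sᶜ : Set V)))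
    (hsmall : ∀ v : V, ¬ LargeDense G k v → (G.neighborSet v).ncard ≤ 7 * k)
    (hcliquecomp : ∀ v : V, LargeDense G k v → ∀ (h : v ∉ S),
      CompIsClique (G.induce (Sᶜ : Set V))
        ((G.induce (Sᶜ : Set V)).connectedComponentMk ⟨v, h⟩))
    (hfewcliques :
      {c : (G.induce (Sᶜ : Set V)).ConnectedComponent |
        CompIsClique (G.induce (Sᶜ : Set V)) c ∧ 3 ≤ c.supp.ncard}.ncard ≤ 8 * k) :
    {v : V | LargeDense G k v ∧ ∃ u : V, G.Adj v u ∧ ¬ LargeDense G k u}.ncard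
      ≤ 84 * k ^ 2 + 4 * k := by
  classical
  set H := G.induce (Sᶜ : Set V) with hHdef
  -- a G-neighbor outside S lies in the same component
  have hnbr : ∀ (v w : V) (hv : v ∉ S) (hw : w ∉ S), G.Adj v w →
      (⟨w, hw⟩ : (Sᶜ : Set V)) ∈ (H.connectedComponentMk ⟨v, hv⟩).supp := by
    intro v w hv hw hadj
    rw [SimpleGraph.ConnectedComponent.mem_supp_iff]
    refine SimpleGraph.ConnectedComponent.sound (SimpleGraph.Adj.reachable ?_)
    simpa [hHdef] using hadj.symm
  -- every large-dense vertex outside S lies in a component with ≥ 3 vertices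
  have hsupp3 : ∀ (v : V) (hv : v ∉ S), LargeDense G k v →
      3 ≤ (H.connectedComponentMk ⟨v, hv⟩).supp.ncard := by
    intro v hv hld
    by_contra hlt
    push_neg at hlt
    set c := H.connectedComponentMk ⟨v, hv⟩ with hc
    have hvmem : (⟨v, hv⟩ : (Sᶜ : Set V)) ∈ c.supp := by
      rw [SimpleGraph.ConnectedComponent.mem_supp_iff]
    have hsub : G.neighborSet v ⊆ S ∪ (Subtype.val '' (c.supp \ {⟨v, hv⟩})) := by
      intro w hw
      by_cases hwS : w ∈ S
      · exact Or.inl hwS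
      · refine Or.inr ⟨⟨w, hwS⟩, ⟨hnbr v w hv hwS hw, ?_⟩, rfl⟩
        simp only [Set.mem_singleton_iff, Subtype.mk.injEq]
        exact (G.ne_of_adj hw).symm
    have h1 : (G.neighborSet v).ncard ≤ S.ncard + (c.supp.ncard - 1) := by
      calc (G.neighborSet v).ncard
          ≤ (S ∪ (Subtype.val '' (c.supp \ {⟨v, hv⟩}))).ncard := Set.ncard_le_ncard hsub
        _ ≤ S.ncard + (Subtype.val '' (c.supp \ {⟨v, hv⟩})).ncard := Set.ncard_union_le _ _
        _ = S.ncard + (c.supp \ {⟨v, hv⟩}).ncard := by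
            rw [Set.ncard_image_of_injective _ Subtype.val_injective]
        _ = S.ncard + (c.supp.ncard - 1) := by
            rw [Set.ncard_diff_singleton_of_mem hvmem]
    have h2 := hld.1
    omega
  set I1 : Set V := {u | u ∈ S ∧ ¬ LargeDense G k u} with hI1
  set A : Set V := {v : V | ∃ u ∈ I1, v ∈ G.neighborSet u} with hA
  set C' : Set H.ConnectedComponent :=
    {c | (CompIsClique H c ∧ 3 ≤ c.supp.ncard) ∧ ∃ w ∈ c.supp, ¬ LargeDense G k w.val} with hC'
  set fB : H.ConnectedComponent → Set V :=
    fun c => {x | LargeDense G k x ∧ ∃ hx : x ∉ S, (⟨x, hx⟩ : (Sᶜ : Set V)) ∈ c.supp} with hfB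
  set B : Set V := {v : V | ∃ c ∈ C', v ∈ fB c} with hB
  have hAcard : A.ncard ≤ 4 * k * (7 * k) := by
    have h := cover_card (7 * k) (fun u => G.neighborSet u) I1 (Set.toFinite _) A
      (fun x hx => hx) (fun u hu => hsmall u hu.2)
    calc A.ncard ≤ I1.ncard * (7 * k) := h
      _ ≤ (4 * k) * (7 * k) := Nat.mul_le_mul_right _
          (le_trans (Set.ncard_le_ncard (fun x hx => hx.1)) hScard)
  have hBcard : B.ncard ≤ 8 * k * (7 * k) := by
    have hbound : ∀ c ∈ C', (fB c).ncard ≤ 7 * k := by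
      intro c hc
      obtain ⟨⟨hclq, -⟩, w0, hw0supp, hw0⟩ := hc
      have hsub : fB c ⊆ G.neighborSet w0.val := by
        rintro x ⟨hxld, hx, hxsupp⟩
        have hne : (⟨x, hx⟩ : (Sᶜ : Set V)) ≠ w0 := by
          intro h
          apply hw0
          rw [← h]
          exact hxld
        have hadj : H.Adj ⟨x, hx⟩ w0 := hclq hxsupp hw0supp hne
        have : G.Adj x w0.val := by simpa [hHdef] using hadj
        exact this.symm
      exact le_trans (Set.ncard_le_ncard hsub) (hsmall _ hw0)
    have h := cover_card (7 * k) fB C' (Set.toFinite _) B (fun x hx => hx) hbound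
    have hC'card : C'.ncard ≤ 8 * k :=
      le_trans (Set.ncard_le_ncard (fun c hc => hc.1)) hfewcliques
    calc B.ncard ≤ C'.ncard * (7 * k) := h
      _ ≤ (8 * k) * (7 * k) := Nat.mul_le_mul_right _ hC'card
  have hcover : {v : V | LargeDense G k v ∧ ∃ u : V, G.Adj v u ∧ ¬ LargeDense G k u}
      ⊆ S ∪ A ∪ B := by
    rintro v ⟨hld, u, hadj, hu⟩
    by_cases hvS : v ∈ S
    · exact Or.inl (Or.inl hvS)
    by_cases huS : u ∈ S
    · exact Or.inl (Or.inr ⟨u, ⟨huS, hu⟩, hadj.symm⟩)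
    · refine Or.inr ⟨H.connectedComponentMk ⟨v, hvS⟩,
        ⟨⟨hcliquecomp v hld hvS, hsupp3 v hvS hld⟩,
          ⟨u, huS⟩, hnbr v u hvS huS hadj, hu⟩, hld, hvS, ?_⟩
      rw [SimpleGraph.ConnectedComponent.mem_supp_iff]
  calc {v : V | LargeDense G k v ∧ ∃ u : V, G.Adj v u ∧ ¬ LargeDense G k u}.ncard
      ≤ (S ∪ A ∪ B).ncard := Set.ncard_le_ncard hcover
    _ ≤ (S ∪ A).ncard + B.ncard := Set.ncard_union_le _ _
    _ ≤ S.ncard + A.ncard + B.ncard := Nat.add_le_add_right (Set.ncard_union_le _ _) _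
    _ ≤ 4 * k + 4 * k * (7 * k) + 8 * k * (7 * k) :=
        add_le_add (add_le_add hScard hAcard) hBcard
    _ = 84 * k ^ 2 + 4 * k := by ring
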